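/- Let α, β be reals with α > −1, β > −1, and α + β ∉ {−1, 0, 1, 2}. Then for every n ≥ 1, in ℝ[X]: (x + 1)·P_{n−1}^{(α,β)}(x) = P_n^{(α,β−1)}(x) + [2(β+n−1)(n+α+β−1)/((2n+α+β−1)(2n+α+β−2))]·P_{n−1}^{(α,β−1)}(x). -/

import Mathlib

set_option maxHeartbeats 1000000

open Polynomial

/-- `jacobiC a b n` is the recurrence coefficient `c_{n+1}^{(a,b)}` of the monic
Jacobi polynomials. -/
noncomputable def jacobiC (a b : ℝ) (n : ℕ) : ℝ :=
  (b ^ 2 - a ^ 2) / ((2 * (n : ℝ) + a + b) * (2 * (n : ℝ) + a + b + 2))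

/-- `jacobiL a b n` is the recurrence coefficient `λ_{n+1}^{(a,b)}` of the monic
Jacobi polynomials. -/
noncomputable def jacobiL (a b : ℝ) (n : ℕ) : ℝ :=
  4 * (n : ℝ) * ((n : ℝ) + a) * ((n : ℝ) + b) * ((n : ℝ) + a + b) /
    ((2 * (n : ℝ) + a + b) ^ 2 * (2 * (n : ℝ) + a + b + 1) * (2 * (n : ℝ) + a + b - 1))

/-- The monic Jacobi polynomials `P_n^{(a,b)}`, defined by the three-term recurrence
`P_{n+1} = (X - c_{n+1}) P_n - λ_{n+1} P_{n-1}` with `P_{-1} = 0`, `P_0 = 1`. -/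
noncomputable def jacobiP (a b : ℝ) : ℕ → Polynomial ℝ
  | 0 => 1
  | 1 => X - Polynomial.C (jacobiC a b 0)
  | n + 2 => (X - Polynomial.C (jacobiC a b (n + 1))) * jacobiP a b (n + 1)
      - Polynomial.C (jacobiL a b (n + 1)) * jacobiP a b n

/-- The connection coefficient `χ_n`. -/
noncomputable def chiAux (α β : ℝ) (n : ℕ) : ℝ :=
  2 * (β + (n : ℝ) - 1) * ((n : ℝ) + α + β - 1) /
    ((2 * (n : ℝ) + α + β - 1) * (2 * (n : ℝ) + α + β - 2))

private theorem nz_aux : ∀ x y : ℝ, (y ≠ 0) → (x = y) → x ≠ 0 := by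
  rintro x y hy rfl; exact hy

private theorem e1_aux (α β t : ℝ) (h2 : 2*t+α+β+2 ≠ 0)
    (h3 : 2*t+α+β+3 ≠ 0) (h4 : 2*t+α+β+4 ≠ 0) (h5 : 2*t+α+β+5 ≠ 0) :
    2 * (β + (t + 3) - 1) * (t + 3 + α + β - 1) /
        ((2 * (t + 3) + α + β - 1) * (2 * (t + 3) + α + β - 2))
      = 2 * (β + (t + 2) - 1) * (t + 2 + α + β - 1) /
          ((2 * (t + 2) + α + β - 1) * (2 * (t + 2) + α + β - 2))
        + ((β - 1) ^ 2 - α ^ 2) /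
          ((2 * (t + 2) + α + (β - 1)) * (2 * (t + 2) + α + (β - 1) + 2))
        - (β ^ 2 - α ^ 2) / ((2 * (t + 1) + α + β) * (2 * (t + 1) + α + β + 2)) := by
  have b1 : 2 * (t + 3) + α + β - 1 ≠ 0 := nz_aux _ _ h5 (by ring)
  have b2 : 2 * (t + 3) + α + β - 2 ≠ 0 := nz_aux _ _ h4 (by ring)
  have b3 : 2 * (t + 2) + α + β - 1 ≠ 0 := nz_aux _ _ h3 (by ring)
  have b4 : 2 * (t + 2) + α + β - 2 ≠ 0 := nz_aux _ _ h2 (by ring)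
  have b5 : 2 * (t + 2) + α + (β - 1) ≠ 0 := nz_aux _ _ h3 (by ring)
  have b6 : 2 * (t + 2) + α + (β - 1) + 2 ≠ 0 := nz_aux _ _ h5 (by ring)
  have b7 : 2 * (t + 1) + α + β ≠ 0 := nz_aux _ _ h2 (by ring)
  have b8 : 2 * (t + 1) + α + β + 2 ≠ 0 := nz_aux _ _ h4 (by ring)
  field_simp
  ring

private theorem e2_aux (α β t : ℝ) (h1 : 2*t+α+β+1 ≠ 0) (h2 : 2*t+α+β+2 ≠ 0)
    (h3 : 2*t+α+β+3 ≠ 0) (h4 : 2*t+α+β+4 ≠ 0) :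
    2 * (β + (t + 2) - 1) * (t + 2 + α + β - 1) /
        ((2 * (t + 2) + α + β - 1) * (2 * (t + 2) + α + β - 2)) *
      (((β - 1) ^ 2 - α ^ 2) / ((2 * (t + 1) + α + (β - 1)) * (2 * (t + 1) + α + (β - 1) + 2))
        - (β ^ 2 - α ^ 2) / ((2 * (t + 1) + α + β) * (2 * (t + 1) + α + β + 2)))
      + 4 * (t + 2) * (t + 2 + α) * (t + 2 + (β - 1)) * (t + 2 + α + (β - 1)) /
        ((2 * (t + 2) + α + (β - 1)) ^ 2 * (2 * (t + 2) + α + (β - 1) + 1) *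
          (2 * (t + 2) + α + (β - 1) - 1))
      = 4 * (t + 1) * (t + 1 + α) * (t + 1 + β) * (t + 1 + α + β) /
        ((2 * (t + 1) + α + β) ^ 2 * (2 * (t + 1) + α + β + 1) * (2 * (t + 1) + α + β - 1)) := by
  have b1 : 2 * (t + 1) + α + (β - 1) ≠ 0 := nz_aux _ _ h1 (by ring)
  have b2 : 2 * (t + 1) + α + (β - 1) + 2 ≠ 0 := nz_aux _ _ h3 (by ring)
  have b3 : 2 * (t + 1) + α + β ≠ 0 := nz_aux _ _ h2 (by ring)
  have b4 : 2 * (t + 1) + α + β + 2 ≠ 0 := nz_aux _ _ h4 (by ring)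
  have b7 : 2 * (t + 2) + α + (β - 1) ≠ 0 := nz_aux _ _ h3 (by ring)
  have b8 : 2 * (t + 2) + α + (β - 1) + 1 ≠ 0 := nz_aux _ _ h4 (by ring)
  have b9 : 2 * (t + 2) + α + (β - 1) - 1 ≠ 0 := nz_aux _ _ h2 (by ring)
  have b10 : 2 * (t + 1) + α + β + 1 ≠ 0 := nz_aux _ _ h3 (by ring)
  have b11 : 2 * (t + 1) + α + β - 1 ≠ 0 := nz_aux _ _ h1 (by ring)
  set D : ℝ := (2*t+α+β+1) * (2*t+α+β+2)^2 * ((2*t+α+β+3)^2 * (2*t+α+β+4)) with hD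
  have hDne : D ≠ 0 := by
    apply mul_ne_zero (mul_ne_zero h1 (pow_ne_zero 2 h2))
    exact mul_ne_zero (pow_ne_zero 2 h3) h4
  have hA : 2 * (β + (t + 2) - 1) * (t + 2 + α + β - 1) /
        ((2 * (t + 2) + α + β - 1) * (2 * (t + 2) + α + β - 2)) *
      (((β - 1) ^ 2 - α ^ 2) / ((2 * (t + 1) + α + (β - 1)) * (2 * (t + 1) + α + (β - 1) + 2))
        - (β ^ 2 - α ^ 2) / ((2 * (t + 1) + α + β) * (2 * (t + 1) + α + β + 2)))
      = (4 * (β + t + 1) * (t + α + β + 1) *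
          ((t+1)*(t+1+α)*((2*t+α+β+3)*(2*t+α+β+4))
            - (t+2)*(t+2+α)*((2*t+α+β+1)*(2*t+α+β+2)))) / D := by
    rw [div_sub_div _ _ (mul_ne_zero b1 b2) (mul_ne_zero b3 b4), div_mul_div_comm, hD]
    congr 1 <;> ring
  have hB : 4 * (t + 2) * (t + 2 + α) * (t + 2 + (β - 1)) * (t + 2 + α + (β - 1)) /
        ((2 * (t + 2) + α + (β - 1)) ^ 2 * (2 * (t + 2) + α + (β - 1) + 1) *
          (2 * (t + 2) + α + (β - 1) - 1))
      = (4 * (t + 2) * (t + 2 + α) * (t + 1 + β) * (t + 1 + α + β) *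
          ((2*t+α+β+1)*(2*t+α+β+2))) / D := by
    rw [hD, div_eq_div_iff (mul_ne_zero (mul_ne_zero (pow_ne_zero 2 b7) b8) b9) hDne]
    ring
  have hC : 4 * (t + 1) * (t + 1 + α) * (t + 1 + β) * (t + 1 + α + β) /
        ((2 * (t + 1) + α + β) ^ 2 * (2 * (t + 1) + α + β + 1) * (2 * (t + 1) + α + β - 1))
      = (4 * (t + 1) * (t + 1 + α) * (t + 1 + β) * (t + 1 + α + β) *
          ((2*t+α+β+3)*(2*t+α+β+4))) / D := by
    rw [hD, div_eq_div_iff (mul_ne_zero (mul_ne_zero (pow_ne_zero 2 b3) b10) b11) hDne]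
    ring
  rw [hA, hB, hC, ← add_div]
  congr 1
  ring

private theorem e3_aux (α β t : ℝ) :
    2 * (β + (t + 2) - 1) * (t + 2 + α + β - 1) /
        ((2 * (t + 2) + α + β - 1) * (2 * (t + 2) + α + β - 2)) *
      (4 * (t + 1) * (t + 1 + α) * (t + 1 + (β - 1)) * (t + 1 + α + (β - 1)) /
        ((2 * (t + 1) + α + (β - 1)) ^ 2 * (2 * (t + 1) + α + (β - 1) + 1) *
          (2 * (t + 1) + α + (β - 1) - 1)))
      = 4 * (t + 1) * (t + 1 + α) * (t + 1 + β) * (t + 1 + α + β) /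
          ((2 * (t + 1) + α + β) ^ 2 * (2 * (t + 1) + α + β + 1) * (2 * (t + 1) + α + β - 1)) *
        (2 * (β + (t + 1) - 1) * (t + 1 + α + β - 1) /
          ((2 * (t + 1) + α + β - 1) * (2 * (t + 1) + α + β - 2))) := by
  rw [div_mul_div_comm, div_mul_div_comm]
  congr 1 <;> ring

theorem quasiGeronimus_jacobi_compact_sol4
    (α β : ℝ) (hα : -1 < α) (hβ : -1 < β)
    (hab1 : α + β ≠ -1) (hab0 : α + β ≠ 0) (hab2 : α + β ≠ 1) (hab3 : α + β ≠ 2) :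
    ∀ n : ℕ, 1 ≤ n →
      (X + 1) * jacobiP α β (n - 1) =
        jacobiP α (β - 1) n
        + Polynomial.C (2 * (β + (n : ℝ) - 1) * ((n : ℝ) + α + β - 1) /
            ((2 * (n : ℝ) + α + β - 1) * (2 * (n : ℝ) + α + β - 2)))
          * jacobiP α (β - 1) (n - 1) := by
  have hden : ∀ m k : ℕ, 2*(m:ℝ)+α+β+(k:ℝ) ≠ 0 := by
    intro m k
    rcases Nat.eq_zero_or_pos m with rfl | hm
    · rcases k with _|_|k
      · simpa using hab0
      · intro h; apply hab1; push_cast at h; linarith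
      · have hc : (0:ℝ) ≤ (k:ℝ) := Nat.cast_nonneg _
        intro h; push_cast at h; linarith
    · have hm' : (1:ℝ) ≤ (m:ℝ) := by exact_mod_cast hm
      have hc : (0:ℝ) ≤ (k:ℝ) := Nat.cast_nonneg _
      intro h; linarith
  have hsm1 : α + β - 1 ≠ 0 := fun h => hab2 (by linarith)
  have hs0 : α + β ≠ 0 := hab0
  have hs1 : α + β + 1 ≠ 0 := fun h => hab1 (by linarith)
  have hs2 : α + β + 2 ≠ 0 := by intro h; linarith
  have hs3 : α + β + 3 ≠ 0 := by intro h; linarith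
  -- scalar identities for the two base cases
  have base1 : chiAux α β 1 - jacobiC α (β - 1) 0 = 1 := by
    simp only [chiAux, jacobiC]
    push_cast
    have a1 : (2 * (1:ℝ) + α + β - 1) ≠ 0 := nz_aux _ _ hs1 (by ring)
    have a2 : (2 * (1:ℝ) + α + β - 2) ≠ 0 := nz_aux _ _ hs0 (by ring)
    have a3 : (2 * (0:ℝ) + α + (β - 1)) ≠ 0 := nz_aux _ _ hsm1 (by ring)
    have a4 : (2 * (0:ℝ) + α + (β - 1) + 2) ≠ 0 := nz_aux _ _ hs1 (by ring)
    rw [div_sub_div _ _ (mul_ne_zero a1 a2) (mul_ne_zero a3 a4),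
      div_eq_iff (mul_ne_zero (mul_ne_zero a1 a2) (mul_ne_zero a3 a4))]
    ring
  have base2a : (1:ℝ) - jacobiC α β 0 + jacobiC α (β - 1) 1 + jacobiC α (β - 1) 0
      = chiAux α β 2 := by
    simp only [chiAux, jacobiC]
    push_cast
    have a1 : (2 * (0:ℝ) + α + β) ≠ 0 := nz_aux _ _ hs0 (by ring)
    have a2 : (2 * (0:ℝ) + α + β + 2) ≠ 0 := nz_aux _ _ hs2 (by ring)
    have a3 : (2 * (1:ℝ) + α + (β - 1)) ≠ 0 := nz_aux _ _ hs1 (by ring)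
    have a4 : (2 * (1:ℝ) + α + (β - 1) + 2) ≠ 0 := nz_aux _ _ hs3 (by ring)
    have a5 : (2 * (0:ℝ) + α + (β - 1)) ≠ 0 := nz_aux _ _ hsm1 (by ring)
    have a6 : (2 * (0:ℝ) + α + (β - 1) + 2) ≠ 0 := nz_aux _ _ hs1 (by ring)
    have a7 : (2 * (2:ℝ) + α + β - 1) ≠ 0 := nz_aux _ _ hs3 (by ring)
    have a8 : (2 * (2:ℝ) + α + β - 2) ≠ 0 := nz_aux _ _ hs2 (by ring)
    rw [sub_div' (mul_ne_zero a1 a2),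
      div_add_div _ _ (mul_ne_zero a1 a2) (mul_ne_zero a3 a4),
      div_add_div _ _ (mul_ne_zero (mul_ne_zero a1 a2) (mul_ne_zero a3 a4)) (mul_ne_zero a5 a6),
      div_eq_div_iff (mul_ne_zero (mul_ne_zero (mul_ne_zero a1 a2) (mul_ne_zero a3 a4)) (mul_ne_zero a5 a6)) (mul_ne_zero a7 a8)]
    ring
  have base2b : jacobiC α β 0 = jacobiL α (β - 1) 1 + jacobiC α (β - 1) 0
      - jacobiC α β 0 * jacobiC α (β - 1) 0 + jacobiC α (β - 1) 0 ^ 2 := by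
    simp only [chiAux, jacobiC, jacobiL]
    push_cast
    have a1 : (2 * (0:ℝ) + α + β) ≠ 0 := nz_aux _ _ hs0 (by ring)
    have a2 : (2 * (0:ℝ) + α + β + 2) ≠ 0 := nz_aux _ _ hs2 (by ring)
    have a3 : (2 * (1:ℝ) + α + (β - 1)) ≠ 0 := nz_aux _ _ hs1 (by ring)
    have a4 : (2 * (1:ℝ) + α + (β - 1) + 1) ≠ 0 := nz_aux _ _ hs2 (by ring)
    have a5 : (2 * (1:ℝ) + α + (β - 1) - 1) ≠ 0 := nz_aux _ _ hs0 (by ring)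
    have a6 : (2 * (0:ℝ) + α + (β - 1)) ≠ 0 := nz_aux _ _ hsm1 (by ring)
    have a7 : (2 * (0:ℝ) + α + (β - 1) + 2) ≠ 0 := nz_aux _ _ hs1 (by ring)
    have hq1 : ((2 * (1:ℝ) + α + (β - 1)) ^ 2 * (2 * 1 + α + (β - 1) + 1) * (2 * 1 + α + (β - 1) - 1)) ≠ 0 :=
      mul_ne_zero (mul_ne_zero (pow_ne_zero 2 a3) a4) a5
    have hq2 : ((2 * (0:ℝ) + α + (β - 1)) * (2 * 0 + α + (β - 1) + 2)) ≠ 0 := mul_ne_zero a6 a7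
    have hq3 : ((2 * (0:ℝ) + α + β) * (2 * 0 + α + β + 2)) ≠ 0 := mul_ne_zero a1 a2
    rw [div_mul_div_comm, div_pow,
      div_add_div _ _ hq1 hq2,
      div_sub_div _ _ (mul_ne_zero hq1 hq2) (mul_ne_zero hq3 hq2),
      div_add_div _ _ (mul_ne_zero (mul_ne_zero hq1 hq2) (mul_ne_zero hq3 hq2)) (pow_ne_zero 2 hq2),
      div_eq_div_iff hq3 (mul_ne_zero (mul_ne_zero (mul_ne_zero hq1 hq2) (mul_ne_zero hq3 hq2)) (pow_ne_zero 2 hq2))]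
    ring
  have key : ∀ m : ℕ,
      ((X + 1) * jacobiP α β m =
        jacobiP α (β - 1) (m + 1) + C (chiAux α β (m + 1)) * jacobiP α (β - 1) m)
      ∧ ((X + 1) * jacobiP α β (m + 1) =
        jacobiP α (β - 1) (m + 2) + C (chiAux α β (m + 2)) * jacobiP α (β - 1) (m + 1)) := by
    intro m
    induction m with
    | zero =>
      constructor
      · show (X + 1) * jacobiP α β 0 =
          jacobiP α (β - 1) 1 + C (chiAux α β 1) * jacobiP α (β - 1) 0
        simp only [jacobiP]
        have E : (C (chiAux α β 1) : ℝ[X]) - C (jacobiC α (β - 1) 0) = 1 := by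
          rw [← C_sub, base1, C_1]
        linear_combination -E
      · show (X + 1) * jacobiP α β 1 =
          jacobiP α (β - 1) 2 + C (chiAux α β 2) * jacobiP α (β - 1) 1
        have h1 : jacobiP α β 1 = X - C (jacobiC α β 0) := rfl
        have h2 : jacobiP α (β - 1) 1 = X - C (jacobiC α (β - 1) 0) := rfl
        have h3 : jacobiP α (β - 1) 2 =
            (X - C (jacobiC α (β - 1) 1)) * jacobiP α (β - 1) 1
              - C (jacobiL α (β - 1) 1) * jacobiP α (β - 1) 0 := rfl
        have h4 : jacobiP α (β - 1) 0 = 1 := rfl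
        have E1 : (1 : ℝ[X]) - C (jacobiC α β 0) + C (jacobiC α (β - 1) 1)
            + C (jacobiC α (β - 1) 0) = C (chiAux α β 2) := by
          rw [← base2a, C_add, C_add, C_sub, C_1]
        have E0 : (C (jacobiC α β 0) : ℝ[X]) = C (jacobiL α (β - 1) 1)
            + C (jacobiC α (β - 1) 0) - C (jacobiC α β 0) * C (jacobiC α (β - 1) 0)
            + C (jacobiC α (β - 1) 0) ^ 2 := by
          have h := congrArg (Polynomial.C : ℝ →+* ℝ[X]) base2b
          simpa only [C_add, C_sub, C_mul, C_pow] using h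
        rw [h1, h3, h2, h4]
        linear_combination (X - C (jacobiC α (β - 1) 0)) * E1 - E0
    | succ m ih =>
      refine ⟨ih.2, ?_⟩
      show (X + 1) * jacobiP α β (m + 2) =
        jacobiP α (β - 1) (m + 3) + C (chiAux α β (m + 3)) * jacobiP α (β - 1) (m + 2)
      have hk1 : 2*(m:ℝ)+α+β+1 ≠ 0 := by simpa using hden m 1
      have hk2 : 2*(m:ℝ)+α+β+2 ≠ 0 := by simpa using hden m 2
      have hk3 : 2*(m:ℝ)+α+β+3 ≠ 0 := by simpa using hden m 3
      have hk4 : 2*(m:ℝ)+α+β+4 ≠ 0 := by simpa using hden m 4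
      have hk5 : 2*(m:ℝ)+α+β+5 ≠ 0 := by simpa using hden m 5
      have e1 : chiAux α β (m + 3) = chiAux α β (m + 2) + jacobiC α (β - 1) (m + 2)
          - jacobiC α β (m + 1) := by
        simp only [chiAux, jacobiC]
        push_cast
        linear_combination e1_aux α β (m:ℝ) hk2 hk3 hk4 hk5
      have e2 : chiAux α β (m + 2) * (jacobiC α (β - 1) (m + 1) - jacobiC α β (m + 1))
          + jacobiL α (β - 1) (m + 2) = jacobiL α β (m + 1) := by
        simp only [chiAux, jacobiC, jacobiL]
        push_cast
        linear_combination e2_aux α β (m:ℝ) hk1 hk2 hk3 hk4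
      have e3 : chiAux α β (m + 2) * jacobiL α (β - 1) (m + 1)
          = jacobiL α β (m + 1) * chiAux α β (m + 1) := by
        simp only [chiAux, jacobiL]
        push_cast
        linear_combination e3_aux α β (m:ℝ)
      have hP : jacobiP α β (m + 2) = (X - C (jacobiC α β (m + 1))) * jacobiP α β (m + 1)
          - C (jacobiL α β (m + 1)) * jacobiP α β m := rfl
      have hQ3 : jacobiP α (β - 1) (m + 3) =
          (X - C (jacobiC α (β - 1) (m + 2))) * jacobiP α (β - 1) (m + 2)
            - C (jacobiL α (β - 1) (m + 2)) * jacobiP α (β - 1) (m + 1) := rfl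
      have hQ2 : jacobiP α (β - 1) (m + 2) =
          (X - C (jacobiC α (β - 1) (m + 1))) * jacobiP α (β - 1) (m + 1)
            - C (jacobiL α (β - 1) (m + 1)) * jacobiP α (β - 1) m := rfl
      have E1 : C (chiAux α β (m + 3)) = C (chiAux α β (m + 2))
          + C (jacobiC α (β - 1) (m + 2)) - C (jacobiC α β (m + 1)) := by
        rw [e1, C_sub, C_add]
      have E2 : C (chiAux α β (m + 2)) * (C (jacobiC α (β - 1) (m + 1))
            - C (jacobiC α β (m + 1))) + C (jacobiL α (β - 1) (m + 2))
          = C (jacobiL α β (m + 1)) := by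
        rw [← C_sub, ← C_mul, ← C_add, e2]
      have E3 : C (chiAux α β (m + 2)) * C (jacobiL α (β - 1) (m + 1))
          = C (jacobiL α β (m + 1)) * C (chiAux α β (m + 1)) := by
        rw [← C_mul, ← C_mul, e3]
      linear_combination (X + 1) * hP + (X - C (jacobiC α β (m + 1))) * ih.2
        - C (jacobiL α β (m + 1)) * ih.1 - hQ3 - C (chiAux α β (m + 2)) * hQ2
        - jacobiP α (β - 1) (m + 2) * E1 + jacobiP α (β - 1) (m + 1) * E2
        + jacobiP α (β - 1) m * E3
  intro n hn
  obtain ⟨m, rfl⟩ := Nat.exists_eq_add_of_le' hn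
  have := (key m).1
  simp only [chiAux] at this
  simpa using this
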